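/- Let k be a field of characteristic p > 0, u ≥ 1 an integer, λ ∈ k with λ ∉ k^{p^u}, and d' ≥ 1 an integer coprime to p^u (in fact with gcd(d', p) = 1). Then the ring R = k[x, y]/(y^{d'} − x^{p^u} + λ) is an integral domain, i.e., the polynomial y^{d'} − x^{p^u} + λ is irreducible in k[x, y]. -/

import Mathlib

open MvPolynomial

/-- In characteristic `p > 0`, with `u ≥ 1`, `λ ∉ k^{p^u}` and
`gcd(d', p) = 1`, `d' ≥ 1`, the polynomial `y^{d'} − x^{p^u} + λ` is irreducible in
`k[x, y]`, i.e. `R = k[x,y]/(y^{d'} − x^{p^u} + λ)` is an integral domain. -/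
theorem stmt3 (k : Type*) [Field k] (p : ℕ) [Fact p.Prime] [CharP k p]
    (u : ℕ) (hu : 1 ≤ u) (lam : k) (hlam : ∀ x : k, x ^ p ^ u ≠ lam)
    (d' : ℕ) (hd' : 1 ≤ d') (hcop : Nat.Coprime d' p) :
    Irreducible ((X 1 : MvPolynomial (Fin 2) k) ^ d' - X 0 ^ p ^ u + C lam) := by
  classical
  have hp : p.Prime := Fact.out
  have hlam0 : lam ≠ 0 := fun h => hlam 0 (by rw [h]; exact zero_pow (pow_ne_zero u hp.ne_zero))
  -- g = Y^{d'} + λ in k[Y]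
  set g : Polynomial k := Polynomial.X ^ d' + Polynomial.C lam with hg
  have hgsep : g.Separable := by
    have : g = Polynomial.X ^ d' - Polynomial.C (-lam) := by ring_nf; simp; exact hg
    rw [this]
    refine Polynomial.separable_X_pow_sub_C _ ?_ (neg_ne_zero.mpr hlam0)
    rw [Ne, CharP.cast_eq_zero_iff k p d']
    exact (hp.coprime_iff_not_dvd.mp hcop.symm)
  have hgsq : Squarefree g := hgsep.squarefree
  have hg0 : g ≠ 0 := hgsq.ne_zero
  have hgdeg : g.natDegree = d' := Polynomial.natDegree_X_pow_add_C
  have hgu : ¬ IsUnit g := by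
    intro h
    have := Polynomial.natDegree_eq_zero_of_isUnit h
    omega
  obtain ⟨π, hπirr, hπdvd⟩ := WfDvdMonoid.exists_irreducible_factor hgu hg0
  have hπprime : Prime π := hπirr.prime
  -- The Eisenstein polynomial F = X^{p^u} - C g in (k[Y])[X]
  set F : Polynomial (Polynomial k) := Polynomial.X ^ p ^ u - Polynomial.C g with hF
  have hpu0 : p ^ u ≠ 0 := pow_ne_zero _ hp.ne_zero
  have hFmonic : F.Monic := Polynomial.monic_X_pow_sub_C _ hpu0
  have hFdeg : F.natDegree = p ^ u := Polynomial.natDegree_X_pow_sub_C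
  have hFirr : Irreducible F := by
    set 𝓟 : Ideal (Polynomial k) := Ideal.span {π} with h𝓟
    have h𝓟prime : 𝓟.IsPrime := (Ideal.span_singleton_prime hπprime.ne_zero).mpr hπprime
    have h𝓟top : 𝓟 ≠ ⊤ := by
      rw [h𝓟, Ne, Ideal.span_singleton_eq_top]
      exact hπirr.not_isUnit
    have hcoeff : ∀ n, n < F.natDegree → F.coeff n ∈ 𝓟 := by
      intro n hn
      rw [hFdeg] at hn
      rw [hF, Polynomial.coeff_sub, Polynomial.coeff_X_pow, if_neg hn.ne,
        Polynomial.coeff_C]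
      split_ifs with h
      · rw [h𝓟]
        simpa using Ideal.mem_span_singleton.mpr (dvd_neg.mpr hπdvd)
      · simp
    have hEis : F.IsEisensteinAt 𝓟 := by
      refine hFmonic.isEisensteinAt_of_mem_of_notMem h𝓟top (fun {n} hn => hcoeff n hn) ?_
      rw [hF, Polynomial.coeff_sub, Polynomial.coeff_X_pow, if_neg (Ne.symm hpu0),
        Polynomial.coeff_C, if_pos rfl, h𝓟, Ideal.span_singleton_pow,
        Ideal.mem_span_singleton]
      intro hdvd
      rw [zero_sub, dvd_neg] at hdvd
      exact hπirr.not_isUnit (hgsq π (by rwa [← sq]))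
    exact hEis.irreducible h𝓟prime hFmonic.isPrimitive (by omega)
  -- transfer along the ring equivalence MvPolynomial (Fin 2) k ≃+* (k[Y])[X]
  have h1 : (1 : Fin 2) = Fin.succ 0 := rfl
  have hC1 : MvPolynomial.finSuccEquiv k 1 (C lam) = Polynomial.C (C lam) := by
    rw [MvPolynomial.finSuccEquiv_apply, eval₂Hom_C]; rfl
  have hC0 : MvPolynomial.finSuccEquiv k 0 (C lam) = Polynomial.C (C lam) := by
    rw [MvPolynomial.finSuccEquiv_apply, eval₂Hom_C]; rfl
  have hC2 : MvPolynomial.isEmptyAlgEquiv k (Fin 0) (C lam) = lam := by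
    rw [← MvPolynomial.isEmptyAlgEquiv_symm_apply (R := k) (σ := Fin 0) (r := lam), AlgEquiv.apply_symm_apply]
  have hmap : (((MvPolynomial.finSuccEquiv k 1).toRingEquiv.trans
        ((Polynomial.mapEquiv (MvPolynomial.finSuccEquiv k 0).toRingEquiv).trans
          (Polynomial.mapEquiv (Polynomial.mapEquiv
            (MvPolynomial.isEmptyAlgEquiv k (Fin 0)).toRingEquiv))))
      ((X 1 : MvPolynomial (Fin 2) k) ^ d' - X 0 ^ p ^ u + C lam)) = -F := by
    rw [hF, hg]
    simp only [RingEquiv.trans_apply, AlgEquiv.toRingEquiv_eq_coe, AlgEquiv.coe_ringEquiv,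
      map_add, map_sub, map_pow, h1, MvPolynomial.finSuccEquiv_X_zero,
      MvPolynomial.finSuccEquiv_X_succ, hC1, hC0, hC2, Polynomial.mapEquiv_apply,
      Polynomial.map_add, Polynomial.map_sub, Polynomial.map_pow, Polynomial.map_C,
      Polynomial.map_X]
    simp [hC0, hC2, MvPolynomial.finSuccEquiv_X_zero, Polynomial.C_add, Polynomial.C_pow]
    ring
  have : Irreducible (-F) := (Associated.refl F).neg_right.irreducible hFirr
  rw [← hmap] at this
  exact (MulEquiv.irreducible_iff _).mp this
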